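/- Suppose samples $(\tau_j, v_j)$, $j = 1, \dots, k$, satisfy $v_j = m^\star \tau_j + b^\star + \psi_j$ with $|\psi_j| \le \varepsilon$, and the $\tau_j$ are not all equal. Let $(\hat m, \hat b)$ minimize $\sum_j (m\tau_j + b - v_j)^2$. Then $|\hat m - m^\star| \le \zeta(\tau)\,\varepsilon$ where $\zeta(\tau) = 2 \sum_{i<j}|\tau_i - \tau_j| / \sum_{i<j}(\tau_i - \tau_j)^2$, and $|\hat b - b^\star| \le \varepsilon + \zeta(\tau)\,\varepsilon\, \max_j |\tau_j|$. -/

import Mathlib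

open Finset

private lemma crit_zero (q s : ℝ) (hq : 0 ≤ q)
    (h : ∀ t : ℝ, 0 ≤ 2 * t * s + t ^ 2 * q) : s = 0 := by
  by_contra hs
  have h1 := h (-s / (q + 1))
  have hq1 : (0:ℝ) < q + 1 := by linarith
  have hs2 : 0 < s ^ 2 := by positivity
  field_simp at h1
  nlinarith [sq_nonneg s]

private lemma sum_pair_double {k : ℕ} (g : Fin k → Fin k → ℝ)
    (hsymm : ∀ i j, g i j = g j i) (hdiag : ∀ i, g i i = 0) :
    ∑ i, ∑ j, g i j =
      2 * ∑ p ∈ Finset.univ.filter (fun p : Fin k × Fin k => p.1 < p.2), g p.1 p.2 := by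
  classical
  rw [← Finset.sum_product' (f := fun i j => g i j)]
  rw [← Finset.sum_filter_add_sum_filter_not (Finset.univ ×ˢ Finset.univ)
      (fun p : Fin k × Fin k => p.1 < p.2) (fun p => g p.1 p.2)]
  have huniv : (Finset.univ ×ˢ Finset.univ : Finset (Fin k × Fin k)) = Finset.univ :=
    Finset.univ_product_univ
  rw [huniv]
  have h2 : ∑ p ∈ Finset.univ.filter (fun p : Fin k × Fin k => ¬ p.1 < p.2), g p.1 p.2
      = ∑ p ∈ Finset.univ.filter (fun p : Fin k × Fin k => p.2 < p.1), g p.1 p.2 := by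
    refine (Finset.sum_subset ?_ ?_).symm
    · intro p hp
      simp only [Finset.mem_filter, Finset.mem_univ, true_and] at hp ⊢
      exact not_lt_of_gt hp
    · intro p hp hp2
      simp only [Finset.mem_filter, Finset.mem_univ, true_and, not_lt] at hp hp2
      have : p.1 = p.2 := le_antisymm hp2 hp
      rw [this]; exact hdiag p.2
  have h3 : ∑ p ∈ Finset.univ.filter (fun p : Fin k × Fin k => p.2 < p.1), g p.1 p.2
      = ∑ p ∈ Finset.univ.filter (fun p : Fin k × Fin k => p.1 < p.2), g p.1 p.2 := by
    refine Finset.sum_nbij' (fun p => (p.2, p.1)) (fun p => (p.2, p.1)) ?_ ?_ ?_ ?_ ?_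
    · intro p hp; simp only [Finset.mem_filter, Finset.mem_univ, true_and] at hp ⊢; exact hp
    · intro p hp; simp only [Finset.mem_filter, Finset.mem_univ, true_and] at hp ⊢; exact hp
    · intro p _; rfl
    · intro p _; rfl
    · intro p _; exact hsymm p.1 p.2
  rw [h2, h3]; ring

private lemma double_expand {k : ℕ} (τ ψ : Fin k → ℝ) :
    ∑ i, ∑ j, (τ i - τ j) * (ψ i - ψ j) =
      2 * ((k:ℝ) * ∑ j, τ j * ψ j - (∑ j, τ j) * (∑ j, ψ j)) := by
  have h : ∀ i j : Fin k, (τ i - τ j) * (ψ i - ψ j)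
      = τ i * ψ i - τ i * ψ j - τ j * ψ i + τ j * ψ j := fun i j => by ring
  simp_rw [h, Finset.sum_add_distrib, Finset.sum_sub_distrib, Finset.sum_const,
    Finset.card_univ, Fintype.card_fin, nsmul_eq_mul, ← Finset.mul_sum, ← Finset.sum_mul]
  rw [← Finset.mul_sum]; ring

/-- Least squares on noisy samples of a line recovers the slope and intercept
up to an error proportional to the noise level. -/
theorem noisy_regression_recovery
    (k : ℕ) (τ v ψ : Fin k → ℝ) (mstar bstar ε : ℝ)
    (hv : ∀ j, v j = mstar * τ j + bstar + ψ j)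
    (hψ : ∀ j, |ψ j| ≤ ε)
    (hne : ∃ i j, τ i ≠ τ j)
    (mhat bhat : ℝ)
    (hmin : ∀ m' b' : ℝ,
      ∑ j, (mhat * τ j + bhat - v j) ^ 2 ≤ ∑ j, (m' * τ j + b' - v j) ^ 2) :
    |mhat - mstar| ≤
        (2 * ∑ p ∈ Finset.univ.filter (fun p : Fin k × Fin k => p.1 < p.2),
            |τ p.1 - τ p.2|) /
          (∑ p ∈ Finset.univ.filter (fun p : Fin k × Fin k => p.1 < p.2),
            (τ p.1 - τ p.2) ^ 2) * ε ∧
    |bhat - bstar| ≤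
        ε + (2 * ∑ p ∈ Finset.univ.filter (fun p : Fin k × Fin k => p.1 < p.2),
            |τ p.1 - τ p.2|) /
          (∑ p ∈ Finset.univ.filter (fun p : Fin k × Fin k => p.1 < p.2),
            (τ p.1 - τ p.2) ^ 2) * ε * (⨆ j, |τ j|) := by
  classical
  obtain ⟨i0, j0, hij0⟩ := hne
  have hε : 0 ≤ ε := le_trans (abs_nonneg _) (hψ i0)
  set a := mhat - mstar with ha
  set β := bhat - bstar with hb
  set T1 := ∑ j, τ j with hT1
  set T2 := ∑ j, (τ j)^2 with hT2
  set Sψ := ∑ j, ψ j with hSψ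
  set Sτψ := ∑ j, τ j * ψ j with hSτψ
  set D := ∑ p ∈ Finset.univ.filter (fun p : Fin k × Fin k => p.1 < p.2),
      (τ p.1 - τ p.2) ^ 2 with hD
  set A := ∑ p ∈ Finset.univ.filter (fun p : Fin k × Fin k => p.1 < p.2),
      |τ p.1 - τ p.2| with hA
  set N := ∑ p ∈ Finset.univ.filter (fun p : Fin k × Fin k => p.1 < p.2),
      (τ p.1 - τ p.2) * (ψ p.1 - ψ p.2) with hN
  -- first order condition in m
  have hS1 : ∑ j, τ j * (mhat * τ j + bhat - v j) = 0 := by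
    apply crit_zero T2
    · exact Finset.sum_nonneg fun j _ => sq_nonneg _
    · intro t
      have h := hmin (mhat + t) bhat
      have hexp : ∑ j, ((mhat + t) * τ j + bhat - v j) ^ 2
          = ∑ j, (mhat * τ j + bhat - v j) ^ 2 +
            (2 * t * (∑ j, τ j * (mhat * τ j + bhat - v j)) + t ^ 2 * T2) := by
        have hterm : ∀ j : Fin k, ((mhat + t) * τ j + bhat - v j) ^ 2
            = (mhat * τ j + bhat - v j) ^ 2 +
              (2 * t * (τ j * (mhat * τ j + bhat - v j)) + t ^ 2 * (τ j) ^ 2) :=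
          fun j => by ring
        simp_rw [hterm, Finset.sum_add_distrib, hT2, Finset.mul_sum]
      rw [hexp] at h
      linarith
  -- first order condition in b
  have hS0 : ∑ j, (mhat * τ j + bhat - v j) = 0 := by
    apply crit_zero ((k : ℝ))
    · positivity
    · intro t
      have h := hmin mhat (bhat + t)
      have hexp : ∑ j, (mhat * τ j + (bhat + t) - v j) ^ 2
          = ∑ j, (mhat * τ j + bhat - v j) ^ 2 +
            (2 * t * (∑ j, (mhat * τ j + bhat - v j)) + t ^ 2 * (k : ℝ)) := by
        have hterm : ∀ j : Fin k, (mhat * τ j + (bhat + t) - v j) ^ 2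
            = (mhat * τ j + bhat - v j) ^ 2 +
              (2 * t * (mhat * τ j + bhat - v j) + t ^ 2) := fun j => by ring
        simp_rw [hterm, Finset.sum_add_distrib, Finset.sum_const, Finset.card_univ,
          Fintype.card_fin, nsmul_eq_mul, Finset.mul_sum]
        ring
      rw [hexp] at h
      linarith
  -- rewrite first order conditions via residual identity
  have hres : ∀ j, mhat * τ j + bhat - v j = a * τ j + β - ψ j := by
    intro j; rw [hv j, ha, hb]; ring
  have e0 : a * T1 + β * (k : ℝ) - Sψ = 0 := by
    have h := hS0
    simp_rw [hres, Finset.sum_sub_distrib, Finset.sum_add_distrib, Finset.sum_const,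
      Finset.card_univ, Fintype.card_fin, nsmul_eq_mul, ← Finset.mul_sum] at h
    rw [← hT1, ← hSψ] at h
    linarith [h]
  have e1 : a * T2 + β * T1 - Sτψ = 0 := by
    have h := hS1
    have hterm : ∀ j : Fin k, τ j * (a * τ j + β - ψ j)
        = a * (τ j) ^ 2 + β * τ j - τ j * ψ j := fun j => by ring
    simp_rw [hres, hterm, Finset.sum_sub_distrib, Finset.sum_add_distrib,
      ← Finset.mul_sum] at h
    rw [← hT2, ← hT1, ← hSτψ] at h
    linarith [h]
  -- pair identities
  have hDid : (k : ℝ) * T2 - T1 ^ 2 = D := by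
    have h1 := sum_pair_double (fun i j => (τ i - τ j) * (τ i - τ j))
      (fun i j => by ring) (fun i => by ring)
    have h2 := double_expand τ τ
    have h3 : ∀ p : Fin k × Fin k, (τ p.1 - τ p.2) * (τ p.1 - τ p.2) = (τ p.1 - τ p.2)^2 :=
      fun p => (sq (τ p.1 - τ p.2)).symm ▸ by ring
    simp_rw [h3] at h1
    have h4 : ∀ j : Fin k, τ j * τ j = (τ j)^2 := fun j => by ring
    simp_rw [h4] at h2
    rw [h2] at h1
    rw [hD, hT2, hT1]
    linear_combination h1 / 2
  have hNid : (k : ℝ) * Sτψ - T1 * Sψ = N := by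
    have h1 := sum_pair_double (fun i j => (τ i - τ j) * (ψ i - ψ j))
      (fun i j => by ring) (fun i => by ring)
    have h2 := double_expand τ ψ
    rw [h2] at h1
    rw [hN, hSτψ, hT1, hSψ]
    linear_combination h1 / 2
  -- solve for a
  have haD : a * D = N := by linear_combination (k : ℝ) * e1 - T1 * e0 - a * hDid + hNid
  -- D positive
  have hDpos : 0 < D := by
    rcases lt_or_gt_of_ne (fun h : i0 = j0 => hij0 (by rw [h])) with hlt | hgt
    · have hmem : (i0, j0) ∈ Finset.univ.filter (fun p : Fin k × Fin k => p.1 < p.2) := by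
        simp [hlt]
      have hterm : 0 < (τ i0 - τ j0) ^ 2 := by
        have : τ i0 - τ j0 ≠ 0 := sub_ne_zero.mpr hij0
        positivity
      calc 0 < (τ i0 - τ j0) ^ 2 := hterm
        _ ≤ D := by
          rw [hD]
          exact Finset.single_le_sum (f := fun p : Fin k × Fin k => (τ p.1 - τ p.2) ^ 2)
            (fun p _ => sq_nonneg _) hmem
    · have hmem : (j0, i0) ∈ Finset.univ.filter (fun p : Fin k × Fin k => p.1 < p.2) := by
        simp [hgt]
      have hterm : 0 < (τ j0 - τ i0) ^ 2 := by
        have : τ j0 - τ i0 ≠ 0 := sub_ne_zero.mpr (Ne.symm hij0)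
        positivity
      calc 0 < (τ j0 - τ i0) ^ 2 := hterm
        _ ≤ D := by
          rw [hD]
          exact Finset.single_le_sum (f := fun p : Fin k × Fin k => (τ p.1 - τ p.2) ^ 2)
            (fun p _ => sq_nonneg _) hmem
  -- bound on N
  have hNbound : |N| ≤ 2 * A * ε := by
    calc |N| ≤ ∑ p ∈ Finset.univ.filter (fun p : Fin k × Fin k => p.1 < p.2),
        |(τ p.1 - τ p.2) * (ψ p.1 - ψ p.2)| := Finset.abs_sum_le_sum_abs _ _
      _ ≤ ∑ p ∈ Finset.univ.filter (fun p : Fin k × Fin k => p.1 < p.2),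
        |τ p.1 - τ p.2| * (2 * ε) := by
          apply Finset.sum_le_sum
          intro p _
          rw [abs_mul]
          apply mul_le_mul_of_nonneg_left _ (abs_nonneg _)
          calc |ψ p.1 - ψ p.2| ≤ |ψ p.1| + |ψ p.2| := abs_sub _ _
            _ ≤ 2 * ε := by linarith [hψ p.1, hψ p.2]
      _ = 2 * A * ε := by rw [← Finset.sum_mul, hA]; ring
  -- slope bound
  have hslope : |a| ≤ 2 * A / D * ε := by
    rw [div_mul_eq_mul_div, le_div_iff₀ hDpos]
    calc |a| * D = |a * D| := by rw [abs_mul, abs_of_pos hDpos]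
      _ = |N| := by rw [haD]
      _ ≤ 2 * A * ε := hNbound
  refine ⟨hslope, ?_⟩
  -- intercept bound
  have hkpos : (0:ℝ) < k := by
    have : 0 < k := Fin.pos i0
    exact_mod_cast this
  set M := ⨆ j, |τ j| with hM
  have hMle : ∀ j, |τ j| ≤ M := by
    intro j
    rw [hM]
    exact le_ciSup (f := fun j => |τ j|) (Set.Finite.bddAbove (Set.finite_range _)) j
  have hMnn : 0 ≤ M := le_trans (abs_nonneg _) (hMle i0)
  have hT1le : |T1| ≤ (k:ℝ) * M := by
    calc |T1| ≤ ∑ j, |τ j| := Finset.abs_sum_le_sum_abs _ _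
      _ ≤ ∑ _j : Fin k, M := Finset.sum_le_sum fun j _ => hMle j
      _ = (k:ℝ) * M := by simp [mul_comm]
  have hSψle : |Sψ| ≤ (k:ℝ) * ε := by
    calc |Sψ| ≤ ∑ j, |ψ j| := Finset.abs_sum_le_sum_abs _ _
      _ ≤ ∑ _j : Fin k, ε := Finset.sum_le_sum fun j _ => hψ j
      _ = (k:ℝ) * ε := by simp [mul_comm]
  have hβk : β * (k:ℝ) = Sψ - a * T1 := by linarith [e0]
  have hβ : |β| ≤ ε + |a| * M := by
    have h1 : |β| * (k:ℝ) = |β * (k:ℝ)| := by rw [abs_mul, abs_of_pos hkpos]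
    have h2 : |β * (k:ℝ)| ≤ (k:ℝ) * ε + |a| * ((k:ℝ) * M) := by
      rw [hβk]
      calc |Sψ - a * T1| ≤ |Sψ| + |a * T1| := abs_sub _ _
        _ = |Sψ| + |a| * |T1| := by rw [abs_mul]
        _ ≤ (k:ℝ) * ε + |a| * ((k:ℝ) * M) :=
          add_le_add hSψle (mul_le_mul_of_nonneg_left hT1le (abs_nonneg _))
    have h3 : |β| * (k:ℝ) ≤ (ε + |a| * M) * (k:ℝ) := by
      rw [h1]; calc |β * (k:ℝ)| ≤ (k:ℝ) * ε + |a| * ((k:ℝ) * M) := h2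
        _ = (ε + |a| * M) * (k:ℝ) := by ring
    exact le_of_mul_le_mul_right h3 hkpos
  calc |β| ≤ ε + |a| * M := hβ
    _ ≤ ε + (2 * A / D * ε) * M := by
        have := mul_le_mul_of_nonneg_right hslope hMnn
        linarith
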